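/- Let T be a search tree on the caterpillar C(m_1,...,m_n) and let ℓ_{i,j} be a leg node of T. If ℓ_{i,j} has no children, then its parent in T is the spine node s_i. Otherwise, ℓ_{i,j} has exactly one child in T, and s_i is a descendant of ℓ_{i,j} in T. -/

import Mathlib

/-- A rooted tree (or the empty tree) on a subset `supp` of the vertex type `V`,
represented by parent pointers. -/
structure RTree (V : Type) where
  supp : Finset V
  parent : V → Option V
  parent_eq_none : ∀ v ∉ supp, parent v = none
  mem_of_parent : ∀ {v w : V}, parent v = some w → v ∈ supp ∧ w ∈ supp
  root_unique : ∀ v ∈ supp, ∀ w ∈ supp, parent v = none → parent w = none → v = w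
  reaches_root : ∀ v ∈ supp, ∃ r ∈ supp, parent r = none ∧
    Relation.ReflTransGen (fun a b => parent a = some b) v r

namespace RTree

variable {V : Type}

/-- `T.Anc a v` : `a` is an ancestor of `v` in `T` (possibly `a = v`). -/
def Anc (T : RTree V) (a v : V) : Prop :=
  Relation.ReflTransGen (fun x y => T.parent x = some y) v a

/-- `a` is a strict ancestor of `v`. -/
def StrictAnc (T : RTree V) (a v : V) : Prop := a ≠ v ∧ T.Anc a v

/-- The set of vertices of the subtree rooted at `a` (the descendants of `a`). -/
def descSet (T : RTree V) (a : V) : Set V := {v | T.Anc a v}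

/-- The depth of a node: the number of nodes on the path from the root to it
(the root has depth 1). -/
noncomputable def depth (T : RTree V) (v : V) : ℕ := Set.ncard {a | T.Anc a v}

def IsRoot (T : RTree V) (r : V) : Prop := r ∈ T.supp ∧ T.parent r = none

end RTree

/-- The restriction of a graph to a set of vertices (keeping the ambient vertex type). -/
def restrictG {V : Type} (G : SimpleGraph V) (U : Set V) : SimpleGraph V where
  Adj a b := G.Adj a b ∧ a ∈ U ∧ b ∈ U
  symm := ⟨fun a b ⟨h, ha, hb⟩ => ⟨h.symm, hb, ha⟩⟩
  loopless := ⟨fun a ⟨h, _, _⟩ => G.loopless.irrefl a h⟩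

/-- `T` is a search tree on the induced subgraph `G[U]`: its nodes are the vertices of `U`,
the subtree of every node induces a connected subgraph, and every edge of `G[U]` joins
two comparable nodes of `T`. -/
def IsSTGOn {V : Type} (G : SimpleGraph V) (U : Finset V) (T : RTree V) : Prop :=
  T.supp = U ∧
  (∀ v ∈ U, ((restrictG G ↑U).induce (T.descSet v)).Connected) ∧
  (∀ u v : V, u ∈ U → v ∈ U → G.Adj u v → T.Anc u v ∨ T.Anc v u)

/-- `T` is a search tree on the graph `G`. -/
def IsSTG {V : Type} [Fintype V] (G : SimpleGraph V) (T : RTree V) : Prop :=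
  IsSTGOn G Finset.univ T

/-- `T'` is obtained from `T` by rotating the edge `(p, c)` of `T`, where `p` is
the parent of `c`: `c` replaces `p` (becoming a child of `p`'s former parent, or the
root if `p` was the root), `p` becomes a child of `c`, `p` keeps its other children,
and each child `x` of `c` whose subtree contains a vertex of `G` adjacent to `p`
becomes a child of `p` (the other children of `c` stay children of `c`). -/
def IsRotationAt {V : Type} (G : SimpleGraph V) (T T' : RTree V) (p c : V) : Prop :=
  T.parent c = some p ∧
  T'.supp = T.supp ∧
  T'.parent c = T.parent p ∧
  T'.parent p = some c ∧
  (∀ x : V, x ≠ p → T.parent x = some c →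
    ((∃ u ∈ T.descSet x, G.Adj u p) → T'.parent x = some p) ∧
    (¬(∃ u ∈ T.descSet x, G.Adj u p) → T'.parent x = some c)) ∧
  (∀ x : V, x ≠ c → x ≠ p → T.parent x ≠ some c → T'.parent x = T.parent x)

/-- `T'` is obtained from `T` by a single rotation. -/
def IsRotation {V : Type} (G : SimpleGraph V) (T T' : RTree V) : Prop :=
  ∃ p c, IsRotationAt G T T' p c

/-- `T2` can be obtained from `T1` by exactly `k` rotations. -/
def ReachesIn {V : Type} (G : SimpleGraph V) : ℕ → RTree V → RTree V → Prop
  | 0, T1, T2 => T1 = T2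
  | k+1, T1, T2 => ∃ T', IsRotation G T1 T' ∧ ReachesIn G k T' T2

/-- Vertex type of the caterpillar `C(m_1, …, m_n)`: spine vertices `inl i` and
leg vertices `inr ⟨i, j⟩`. -/
abbrev CatV (n : ℕ) (m : Fin n → ℕ) : Type := Fin n ⊕ (Σ i : Fin n, Fin (m i))

/-- The caterpillar tree `C(m_1, …, m_n)`: the spine `s_1 - s_2 - ⋯ - s_n` is a path,
and leg `ℓ_{i,j}` is adjacent to `s_i`. -/
def caterpillar (n : ℕ) (m : Fin n → ℕ) : SimpleGraph (CatV n m) where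
  Adj x y :=
    match x, y with
    | Sum.inl i, Sum.inl j => i.val + 1 = j.val ∨ j.val + 1 = i.val
    | Sum.inl i, Sum.inr l => l.1 = i
    | Sum.inr l, Sum.inl i => l.1 = i
    | Sum.inr _, Sum.inr _ => False
  symm := ⟨by rintro (i | l) (j | l') h <;> simp_all <;> tauto⟩
  loopless := ⟨by rintro (i | l) h <;> simp_all⟩

/-- The (base 2) Shannon entropy `H(m_1, …, m_n) = ∑_{i : m_i > 0} (m_i/m) log (m/m_i)`. -/
noncomputable def shannonH {n : ℕ} (m : Fin n → ℕ) : ℝ :=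
  ∑ i, if 0 < m i then
    ((m i : ℝ) / (∑ j, (m j : ℝ))) * Real.logb 2 ((∑ j, (m j : ℝ)) / (m i : ℝ))
  else 0

/-- The parent function of the search tree `A(S, π)` on the caterpillar: the legs form a
path at the top of the tree, ordered bottom-to-top according to `π`, and the spine nodes
hang below, arranged according to the BST `S`. -/
def AParent {n : ℕ} {m : Fin n → ℕ} (S : RTree (Fin n))
    (π : Fin (∑ i, m i) ≃ (Σ i : Fin n, Fin (m i))) :
    CatV n m → Option (CatV n m) :=
  fun x => match x with
  | Sum.inl i =>
      match S.parent i with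
      | some j => some (Sum.inl j)
      | none => if h : 0 < ∑ i, m i then some (Sum.inr (π ⟨0, h⟩)) else none
  | Sum.inr l =>
      if h : (π.symm l).val + 1 < ∑ i, m i then
        some (Sum.inr (π ⟨(π.symm l).val + 1, h⟩))
      else none

/-- `T = A(S, π)`. -/
def IsA {n : ℕ} {m : Fin n → ℕ} (S : RTree (Fin n))
    (π : Fin (∑ i, m i) ≃ (Σ i : Fin n, Fin (m i))) (T : RTree (CatV n m)) : Prop :=
  T.supp = Finset.univ ∧ T.parent = AParent S π

/-- The parent function of the search tree `B(S)` on the caterpillar: every leg `ℓ_{i,j}`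
is a (childless) child of `s_i`, and the spine nodes are arranged according to `S`. -/
def BParent {n : ℕ} {m : Fin n → ℕ} (S : RTree (Fin n)) :
    CatV n m → Option (CatV n m) :=
  fun x => match x with
  | Sum.inl i => (S.parent i).map Sum.inl
  | Sum.inr l => some (Sum.inl l.1)

/-- `T = B(S)`. -/
def IsB {n : ℕ} {m : Fin n → ℕ} (S : RTree (Fin n)) (T : RTree (CatV n m)) : Prop :=
  T.supp = Finset.univ ∧ T.parent = BParent S

/-- `σ(π)`: the sequence of spine indices obtained from the leg ordering `π` by replacing
each leg `ℓ_{i,j}` with `i`. -/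
def sigmaOf {n : ℕ} {m : Fin n → ℕ}
    (π : Fin (∑ i, m i) ≃ (Σ i : Fin n, Fin (m i))) : List (Fin n) :=
  List.ofFn (fun j => (π j).1)

/-- Every leg node of `T` is bound, i.e. no leg node has a child. -/
def noFreeLegs {n : ℕ} {m : Fin n → ℕ} (T : RTree (CatV n m)) : Prop :=
  ∀ (x : CatV n m) (l : Σ i : Fin n, Fin (m i)), T.parent x ≠ some (Sum.inr l)

open Classical in
/-- The number of adjacent pairs in a list satisfying `P`. -/
noncomputable def pairAlt {α : Type} (P : α → α → Prop) : List α → ℕ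
  | [] => 0
  | [_] => 0
  | a :: b :: t => (if P a b then 1 else 0) + pairAlt P (b :: t)

open Classical in
/-- Wilber's quantity `λ(S, u, σ)`: 0 if `u` has at most one child; otherwise the number
of adjacent pairs in the restriction of `σ` to the subtree of `u` that do not both lie in
the subtree of one child of `u` and are not both equal to `u`. -/
noncomputable def wilberLam {n : ℕ} (S : RTree (Fin n)) (u : Fin n) (σ : List (Fin n)) : ℕ :=
  if (∃ v w : Fin n, v ≠ w ∧ S.parent v = some u ∧ S.parent w = some u) then
    pairAlt (fun x y =>
      ¬((x = u ∧ y = u) ∨ ∃ ch, S.parent ch = some u ∧ S.Anc ch x ∧ S.Anc ch y))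
      (σ.filter (fun x => decide (S.Anc u x)))
  else 0

/-- `λ'(S, u, σ) = λ(S, u, σ)` plus the number of occurrences of `u` in `σ`. -/
noncomputable def wilberLam' {n : ℕ} (S : RTree (Fin n)) (u : Fin n)
    (σ : List (Fin n)) : ℕ :=
  wilberLam S u σ + σ.count u

/-- Wilber's first lower bound `Λ'(S, σ) = ∑_u λ'(S, u, σ)`. -/
noncomputable def wilberL' {n : ℕ} (S : RTree (Fin n)) (σ : List (Fin n)) : ℕ :=
  ∑ u : Fin n, wilberLam' S u σ

/-- `P` is the projection `T[U]` of `T` onto `U`: its nodes are the nodes of `T` in `U`,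
and the parent of `u` in `P` is the nearest strict ancestor of `u` in `T` that lies
in `U` (which is exactly the result of pruning the vertices outside `U` one by one). -/
def IsProjOn {V : Type} [DecidableEq V] (T : RTree V) (U : Finset V) (P : RTree V) : Prop :=
  P.supp = T.supp ∩ U ∧
  ∀ u w : V, P.parent u = some w ↔
    (u ∈ U ∧ w ∈ U ∧ T.StrictAnc w u ∧ ∀ z ∈ U, T.StrictAnc z u → T.Anc z w)

/-- `P` is obtained from `T` by pruning the vertex `v`. -/
def IsPruneOf {V : Type} [DecidableEq V] (T : RTree V) (v : V) (P : RTree V) : Prop :=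
  IsProjOn T (T.supp.erase v) P

/-- `PruneSeq T l P`: `P` is obtained from `T` by successively pruning the
vertices in the list `l`, in order. -/
def PruneSeq {V : Type} [DecidableEq V] : RTree V → List V → RTree V → Prop
  | T, [], P => P = T
  | T, v :: rest, P => ∃ P', IsPruneOf T v P' ∧ PruneSeq P' rest P

/-- The number of alternations (edges whose endpoints get different colors under `f`)
on the path from the root to `z`. -/
noncomputable def altAt {V K : Type} (f : V → K) (T : RTree V) (z : V) : ℕ :=
  Set.ncard {x | T.Anc x z ∧ ∃ y, T.parent x = some y ∧ f x ≠ f y}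

/-- The alternation number of `T` w.r.t. the coloring `f`: the maximum number of
alternations on a root-to-node path. -/
noncomputable def altNum {V K : Type} (f : V → K) (T : RTree V) : ℕ :=
  T.supp.sup (fun z => altAt f T z)


section LegAux
open Relation

variable {V : Type} {T : RTree V}

private lemma rtree_runique : Relator.RightUnique (fun a b => T.parent a = some b) := by
  intro a b c h1 h2
  rw [h1] at h2; exact Option.some.inj h2

private lemma rtree_no_cycle {v r : V}
    (hr : ReflTransGen (fun a b => T.parent a = some b) v r)
    (hroot : T.parent r = none) :
    ∀ x, T.parent v = some x → ReflTransGen (fun a b => T.parent a = some b) x v → False := by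
  induction hr using ReflTransGen.head_induction_on with
  | refl => intro x hx _; rw [hroot] at hx; cases hx
  | head h' h ih =>
    rename_i a c
    intro x hx hxv
    have hxc : x = c := rtree_runique hx h'
    subst hxc
    rcases hxv.cases_head with heq | ⟨z, hz, hza⟩
    · exact ih x (heq ▸ h') ReflTransGen.refl
    · exact ih z hz (hza.trans (ReflTransGen.single h'))

private lemma rtree_antisymm {a b : V}
    (hroot : ∃ r, T.parent r = none ∧ ReflTransGen (fun a b => T.parent a = some b) a r)
    (hab : ReflTransGen (fun a b => T.parent a = some b) a b)
    (hba : ReflTransGen (fun a b => T.parent a = some b) b a) : a = b := by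
  rcases hab.cases_head with h | ⟨x, hx, hxb⟩
  · exact h
  · obtain ⟨r, hr0, har⟩ := hroot
    exact (rtree_no_cycle har hr0 x hx (hxb.trans hba)).elim

private lemma rtree_child_eq {ℓ c c' v : V}
    (hreach : ∀ u, ∃ r, T.parent r = none ∧ ReflTransGen (fun a b => T.parent a = some b) u r)
    (hc : T.parent c = some ℓ) (hc' : T.parent c' = some ℓ)
    (h1 : ReflTransGen (fun a b => T.parent a = some b) v c)
    (h2 : ReflTransGen (fun a b => T.parent a = some b) v c') : c = c' := by
  have key : ∀ {d d' : V}, T.parent d = some ℓ → T.parent d' = some ℓ →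
      ReflTransGen (fun a b => T.parent a = some b) d d' → d = d' := by
    intro d d' hd hd' hdd
    rcases hdd.cases_head with h | ⟨z, hz, hzd⟩
    · exact h
    · have hzℓ : z = ℓ := rtree_runique hz hd
      subst hzℓ
      obtain ⟨r, hr0, hr⟩ := hreach d'
      exact (rtree_no_cycle hr hr0 z hd' hzd).elim
  rcases ReflTransGen.total_of_right_unique rtree_runique h1 h2 with h | h
  · exact key hc hc' h
  · exact (key hc' hc h).symm

end LegAux

private lemma rtree_first_step {V : Type} {G : SimpleGraph V} {ℓ s : V} {S : Set V}
    (honly : ∀ y, G.Adj ℓ y → y = s) (a b : ↥S) (w : (G.induce S).Walk a b)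
    (ha : (a : V) = ℓ) (hne : (a : V) ≠ (b : V)) : s ∈ S := by
  cases w with
  | nil => exact absurd rfl hne
  | cons hadj p =>
    rename_i v'
    have h1 : G.Adj ↑a ↑v' := hadj
    have h2 : (v' : V) = s := honly _ (ha ▸ h1)
    exact h2 ▸ v'.2

private lemma rtree_walk_to_ell {V : Type} {T : RTree V} {G : SimpleGraph V} {ℓ s c : V}
    (hreach : ∀ u, ∃ r, T.parent r = none ∧
      Relation.ReflTransGen (fun a b => T.parent a = some b) u r)
    (hcomp : ∀ u v : V, G.Adj u v →
      Relation.ReflTransGen (fun a b => T.parent a = some b) u v ∨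
      Relation.ReflTransGen (fun a b => T.parent a = some b) v u)
    (honly : ∀ y, G.Adj y ℓ → y = s)
    (hc : T.parent c = some ℓ) :
    ∀ (a b : ↥(T.descSet ℓ)) (w : (G.induce (T.descSet ℓ)).Walk a b),
      (b : V) = ℓ → Relation.ReflTransGen (fun a b => T.parent a = some b) (a : V) c →
      Relation.ReflTransGen (fun a b => T.parent a = some b) s c := by
  intro a b w
  induction w with
  | nil =>
    intro hb ha
    obtain ⟨r, hr0, hr⟩ := hreach c
    exact (rtree_no_cycle hr hr0 ℓ hc (hb ▸ ha)).elim
  | cons hadj p ih =>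
    rename_i u v' b'
    intro hb ha
    have hGadj : G.Adj (u : V) (v' : V) := hadj
    by_cases hv : (v' : V) = ℓ
    · have hus : (u : V) = s := honly _ (by rw [hv] at hGadj; exact hGadj)
      rw [hus] at ha; exact ha
    · have hv'd : Relation.ReflTransGen (fun a b => T.parent a = some b) (v' : V) ℓ := v'.2
      rcases hv'd.cases_tail with h | ⟨c', hvc', hc'⟩
      · exact absurd h.symm hv
      · rcases hcomp _ _ hGadj with h1 | h2
        · have hucc : c = c' := rtree_child_eq hreach hc hc' ha (h1.trans hvc')
          exact ih hb (hucc ▸ hvc')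
        · exact ih hb (h2.trans ha)
/-- structure of leg nodes in a search tree on a caterpillar. -/
theorem leg_node_structure (n : ℕ) (hn : 1 ≤ n) (m : Fin n → ℕ)
    (T : RTree (CatV n m)) (hT : IsSTG (caterpillar n m) T)
    (i : Fin n) (j : Fin (m i)) :
    ((∀ x : CatV n m, T.parent x ≠ some (Sum.inr ⟨i, j⟩)) →
      T.parent (Sum.inr ⟨i, j⟩) = some (Sum.inl i)) ∧
    ((∃ x : CatV n m, T.parent x = some (Sum.inr ⟨i, j⟩)) →
      (∃! x : CatV n m, T.parent x = some (Sum.inr ⟨i, j⟩)) ∧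
      T.Anc (Sum.inr ⟨i, j⟩) (Sum.inl i)) := by
  obtain ⟨hsupp, hconn, hcomp0⟩ := hT
  set ℓ : CatV n m := Sum.inr ⟨i, j⟩ with hℓdef
  set s : CatV n m := Sum.inl i with hsdef
  set GR : SimpleGraph (CatV n m) :=
    restrictG (caterpillar n m) ↑(Finset.univ : Finset (CatV n m)) with hGRdef
  have hreach : ∀ u, ∃ r, T.parent r = none ∧
      Relation.ReflTransGen (fun a b => T.parent a = some b) u r := by
    intro u
    obtain ⟨r, _, h1, h2⟩ := T.reaches_root u (by rw [hsupp]; exact Finset.mem_univ u)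
    exact ⟨r, h1, h2⟩
  have hres : ∀ a b : CatV n m, GR.Adj a b ↔ (caterpillar n m).Adj a b := by
    intro a b
    constructor
    · exact fun h => h.1
    · exact fun h => ⟨h, by simp, by simp⟩
  have honly0 : ∀ y : CatV n m, (caterpillar n m).Adj y ℓ → y = s := by
    rintro (k | l) h
    · have h' : i = k := h
      rw [hsdef, h']
    · exact h.elim
  have honlyR : ∀ y, GR.Adj y ℓ → y = s := fun y h => honly0 y ((hres _ _).mp h)
  have honlyR' : ∀ y, GR.Adj ℓ y → y = s := fun y h => honlyR y h.symm
  have hcompR : ∀ u v : CatV n m, GR.Adj u v →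
      Relation.ReflTransGen (fun a b => T.parent a = some b) u v ∨
      Relation.ReflTransGen (fun a b => T.parent a = some b) v u := by
    intro u v h
    rcases hcomp0 u v (Finset.mem_univ u) (Finset.mem_univ v) ((hres _ _).mp h) with h1 | h1
    · exact Or.inr h1
    · exact Or.inl h1
  have hadj_sℓ : (caterpillar n m).Adj s ℓ := by
    show ((⟨i, j⟩ : Σ i : Fin n, Fin (m i)).1 = i)
    rfl
  have hℓnes : ℓ ≠ s := by simp [hℓdef, hsdef]
  constructor
  · -- Part 1: no children
    intro hnochild
    have hedge := hcomp0 s ℓ (Finset.mem_univ _) (Finset.mem_univ _) hadj_sℓ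
    have h1 : Relation.ReflTransGen (fun a b => T.parent a = some b) ℓ s := by
      rcases hedge with h | h
      · exact h
      · rcases h.cases_tail with he | ⟨z, _, hz⟩
        · exact absurd he hℓnes
        · exact absurd hz (hnochild z)
    rcases h1.cases_head with he | ⟨x, hx, hxs⟩
    · exact absurd he hℓnes
    have hℓnex : ℓ ≠ x := by
      intro he
      rw [← he] at hx
      exact hnochild ℓ hx
    have hℓx : Relation.ReflTransGen (fun a b => T.parent a = some b) ℓ x :=
      Relation.ReflTransGen.single hx
    obtain ⟨w⟩ := (hconn x (Finset.mem_univ x)).preconnected ⟨ℓ, hℓx⟩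
      ⟨x, Relation.ReflTransGen.refl⟩
    have hsx : s ∈ T.descSet x := rtree_first_step honlyR' _ _ w rfl hℓnex
    have hxeq : x = s := rtree_antisymm (hreach x) hxs hsx
    rw [← hxeq]
    exact hx
  · -- Part 2: has a child
    rintro ⟨x0, hx0⟩
    have hℓnex0 : ℓ ≠ x0 := by
      intro he
      rw [← he] at hx0
      obtain ⟨r, hr0, hr⟩ := hreach ℓ
      exact rtree_no_cycle hr hr0 ℓ hx0 Relation.ReflTransGen.refl
    have hx0d : x0 ∈ T.descSet ℓ := Relation.ReflTransGen.single hx0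
    obtain ⟨w⟩ := (hconn ℓ (Finset.mem_univ ℓ)).preconnected
      ⟨ℓ, Relation.ReflTransGen.refl⟩ ⟨x0, hx0d⟩
    have hsl : s ∈ T.descSet ℓ := rtree_first_step honlyR' _ _ w rfl hℓnex0
    refine ⟨⟨x0, hx0, ?_⟩, hsl⟩
    intro y hy
    obtain ⟨w1⟩ := (hconn ℓ (Finset.mem_univ ℓ)).preconnected
      ⟨x0, hx0d⟩ ⟨ℓ, Relation.ReflTransGen.refl⟩
    have h1 : Relation.ReflTransGen (fun a b => T.parent a = some b) s x0 :=
      rtree_walk_to_ell hreach hcompR honlyR hx0 _ _ w1 rfl Relation.ReflTransGen.refl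
    have hyd : y ∈ T.descSet ℓ := Relation.ReflTransGen.single hy
    obtain ⟨w2⟩ := (hconn ℓ (Finset.mem_univ ℓ)).preconnected
      ⟨y, hyd⟩ ⟨ℓ, Relation.ReflTransGen.refl⟩
    have h2 : Relation.ReflTransGen (fun a b => T.parent a = some b) s y :=
      rtree_walk_to_ell hreach hcompR honlyR hy _ _ w2 rfl Relation.ReflTransGen.refl
    exact rtree_child_eq hreach hy hx0 h2 h1
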